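/- Let (X,T) be a skew product T(y,g) = (Sy, φ(y)g) over a minimal equicontinuous system (Y,S) with compact metric group G and continuous φ : Y → G. If the set Y × {g} is a recurrent point of the induced hyperspace system (K(X), T_K) for some g ∈ G, then (X,T) is uniformly rigid. -/

import Mathlib

open Metric Set

/-- A point `x` is positively recurrent for `T`. -/
def RecurrentPt {Y : Type*} [MetricSpace Y] (T : Y → Y) (x : Y) : Prop :=
  ∀ ε > (0:ℝ), ∀ N : ℕ, ∃ m ≥ N, dist (T^[m] x) x < ε

/-- A system is uniformly rigid if for every `ε > 0` there is `n ≥ 1` with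
`d(T^n x, x) < ε` for every `x`. -/
def UniformlyRigid {X : Type*} [MetricSpace X] (T : X → X) : Prop :=
  ∀ ε > (0:ℝ), ∃ n ≥ 1, ∀ x, dist (T^[n] x) x < ε

/-- Recurrence of a compact set under the induced hyperspace dynamics, phrased with the
Hausdorff distance between the iterated images and the set. -/
def SetRecurrent {X : Type*} [MetricSpace X] (T : X → X) (A : Set X) : Prop :=
  ∀ ε > (0:ℝ), ∀ N : ℕ, ∃ m ≥ N, Metric.hausdorffDist (T^[m] '' A) A < ε

section Aux

variable {Y : Type*} [MetricSpace Y] {G : Type*} [MetricSpace G] [Group G]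

/-- The cocycle of a skew product: `cocyc S φ m y = φ(S^{m-1} y) ⋯ φ(S y) φ(y)`. -/
def cocyc (S : Y ≃ₜ Y) (φ : Y → G) : ℕ → Y → G
  | 0 => fun _ => 1
  | (m+1) => fun y => φ ((⇑S)^[m] y) * cocyc S φ m y

lemma skew_iterate (S : Y ≃ₜ Y) (φ : Y → G) (m : ℕ) (y : Y) (h : G) :
    (fun p : Y × G => (S p.1, φ p.1 * p.2))^[m] (y, h) = ((⇑S)^[m] y, cocyc S φ m y * h) := by
  induction m with
  | zero => simp [cocyc]
  | succ m ih =>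
      rw [Function.iterate_succ_apply', ih]
      simp [cocyc, Function.iterate_succ_apply', mul_assoc]

lemma cocyc_add (S : Y ≃ₜ Y) (φ : Y → G) (m n : ℕ) (y : Y) :
    cocyc S φ (m + n) y = cocyc S φ m ((⇑S)^[n] y) * cocyc S φ n y := by
  have h2 := Function.iterate_add_apply (fun p : Y × G => (S p.1, φ p.1 * p.2)) m n (y, 1)
  rw [skew_iterate, skew_iterate, skew_iterate] at h2
  have := congrArg Prod.snd h2
  simpa [Function.iterate_add_apply, mul_assoc] using this

lemma symm_iterate_apply (S : Y ≃ₜ Y) (m : ℕ) (y : Y) :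
    (⇑S.symm)^[m] ((⇑S)^[m] y) = y := by
  induction m generalizing y with
  | zero => rfl
  | succ m ih =>
      rw [Function.iterate_succ_apply' (⇑S), Function.iterate_succ_apply (⇑S.symm)]
      rw [S.symm_apply_apply]
      exact ih y

lemma skew_inv_iterate (S : Y ≃ₜ Y) (φ : Y → G) (m : ℕ) (y : Y) (h : G) :
    (fun p : Y × G => (S.symm p.1, (φ (S.symm p.1))⁻¹ * p.2))^[m] (y, h)
      = ((⇑S.symm)^[m] y, (cocyc S φ m ((⇑S.symm)^[m] y))⁻¹ * h) := by
  induction m with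
  | zero => simp [cocyc]
  | succ m ih =>
      rw [Function.iterate_succ_apply', ih]
      have hv : (⇑S.symm)^[m+1] y = S.symm ((⇑S.symm)^[m] y) :=
        Function.iterate_succ_apply' _ _ _
      have hc : cocyc S φ (m+1) (S.symm ((⇑S.symm)^[m] y))
          = cocyc S φ m ((⇑S.symm)^[m] y) * φ (S.symm ((⇑S.symm)^[m] y)) := by
        have h1 := cocyc_add S φ m 1 (S.symm ((⇑S.symm)^[m] y))
        simpa [cocyc, S.apply_symm_apply] using h1
      refine Prod.ext (by simp [hv]) ?_
      simp only [hv, hc, mul_inv_rev, mul_assoc]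

lemma exists_close_pair {Z : Type*} [MetricSpace Z] [CompactSpace Z] (p : ℕ → Z)
    {δ : ℝ} (hδ : 0 < δ) : ∃ k l, k < l ∧ dist (p k) (p l) < δ := by
  obtain ⟨a, ψ, hψ, hlim⟩ := CompactSpace.tendsto_subseq p
  rw [Metric.tendsto_atTop] at hlim
  obtain ⟨N, hN⟩ := hlim (δ/2) (by linarith)
  refine ⟨ψ N, ψ (N+1), hψ (by omega), ?_⟩
  calc dist (p (ψ N)) (p (ψ (N+1)))
      ≤ dist (p (ψ N)) a + dist (p (ψ (N+1))) a := dist_triangle_right _ _ _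
    _ < δ/2 + δ/2 := add_lt_add (hN N le_rfl) (hN (N+1) (by omega))
    _ = δ := by ring

end Aux

theorem uniformlyRigid_of_skew_product_fiber_recurrent
    {Y : Type*} [MetricSpace Y] [CompactSpace Y]
    {G : Type*} [MetricSpace G] [CompactSpace G] [Group G] [IsTopologicalGroup G]
    (S : Y ≃ₜ Y)
    (hmin : ∀ y : Y, Dense (Set.range fun n : ℕ => (⇑S)^[n] y))
    (hequi : ∀ ε > (0:ℝ), ∃ δ > (0:ℝ), ∀ y y' : Y, dist y y' < δ →
      ∀ n : ℕ, dist ((⇑S)^[n] y) ((⇑S)^[n] y') < ε)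
    (φ : Y → G) (hφ : Continuous φ) (g : G)
    (hrec : SetRecurrent (fun p : Y × G => (S p.1, φ p.1 * p.2))
        (Set.univ ×ˢ {g}) ∨
      SetRecurrent (fun p : Y × G => (S.symm p.1, (φ (S.symm p.1))⁻¹ * p.2))
        (Set.univ ×ˢ {g})) :
    UniformlyRigid (fun p : Y × G => (S p.1, φ p.1 * p.2)) := by
  classical
  by_cases hY : Nonempty Y
  swap
  · intro ε hε
    exact ⟨1, le_refl 1, fun x => absurd ⟨x.1⟩ hY⟩
  obtain ⟨y₀⟩ := hY
  -- density of the orbit of y₀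
  have hdense : ∀ (y : Y) (r : ℝ), 0 < r → ∃ k : ℕ, dist ((⇑S)^[k] y₀) y < r := by
    intro y r hr
    obtain ⟨z, hz, hzy⟩ := (hmin y₀).exists_dist_lt y hr
    obtain ⟨k, rfl⟩ := hz
    exact ⟨k, by rwa [dist_comm]⟩
  -- recurrence of y₀ at arbitrarily large times
  have RecA : ∀ r > (0:ℝ), ∀ N : ℕ, ∃ m ≥ N, dist ((⇑S)^[m] y₀) y₀ < r := by
    intro r hr N
    obtain ⟨z, hz, hzy⟩ := (hmin ((⇑S)^[N] y₀)).exists_dist_lt y₀ hr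
    obtain ⟨k, rfl⟩ := hz
    refine ⟨k + N, by omega, ?_⟩
    rw [Function.iterate_add_apply]
    rwa [dist_comm]
  -- Key: closeness of S^[m] y₀ to y₀ gives uniform rigidity of S^[m]
  have KeyD : ∀ ε > (0:ℝ), ∃ δ > (0:ℝ), ∀ m : ℕ, dist ((⇑S)^[m] y₀) y₀ < δ →
      ∀ y, dist ((⇑S)^[m] y) y < ε := by
    intro ε hε
    obtain ⟨δh, hδh, hh⟩ := hequi (ε/3) (by linarith)
    refine ⟨δh, hδh, fun m hm y => ?_⟩
    obtain ⟨k, hk⟩ := hdense y (min δh (ε/3)) (by positivity)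
    have h1 : dist ((⇑S)^[m] y) ((⇑S)^[m] ((⇑S)^[k] y₀)) < ε/3 := by
      refine hh y ((⇑S)^[k] y₀) ?_ m
      rw [dist_comm]
      exact hk.trans_le (min_le_left _ _)
    have h2 : dist ((⇑S)^[m] ((⇑S)^[k] y₀)) ((⇑S)^[k] y₀) < ε/3 := by
      have hcomm : (⇑S)^[m] ((⇑S)^[k] y₀) = (⇑S)^[k] ((⇑S)^[m] y₀) := by
        rw [← Function.iterate_add_apply, ← Function.iterate_add_apply, Nat.add_comm]
      rw [hcomm]
      exact hh _ _ hm k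
    have h3 : dist ((⇑S)^[k] y₀) y < ε/3 := hk.trans_le (min_le_right _ _)
    calc dist ((⇑S)^[m] y) y
        ≤ dist ((⇑S)^[m] y) ((⇑S)^[m] ((⇑S)^[k] y₀)) + dist ((⇑S)^[m] ((⇑S)^[k] y₀)) y :=
          dist_triangle _ _ _
      _ ≤ dist ((⇑S)^[m] y) ((⇑S)^[m] ((⇑S)^[k] y₀)) +
          (dist ((⇑S)^[m] ((⇑S)^[k] y₀)) ((⇑S)^[k] y₀) + dist ((⇑S)^[k] y₀) y) := by
          have := dist_triangle ((⇑S)^[m] ((⇑S)^[k] y₀)) ((⇑S)^[k] y₀) y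
          linarith
      _ < ε/3 + (ε/3 + ε/3) := by linarith
      _ = ε := by ring
  -- uniform rigidity of S along arbitrarily large times
  have RigB : ∀ ε > (0:ℝ), ∀ N : ℕ, ∃ m ≥ N, ∀ y, dist ((⇑S)^[m] y) y < ε := by
    intro ε hε N
    obtain ⟨δ, hδ, hK⟩ := KeyD ε hε
    obtain ⟨m, hmN, hm⟩ := RecA δ hδ N
    exact ⟨m, hmN, hK m hm⟩
  -- backward equicontinuity
  have BackC : ∀ ε > (0:ℝ), ∃ δ > (0:ℝ), ∀ (u v : Y) (nn : ℕ),
      dist ((⇑S)^[nn] u) ((⇑S)^[nn] v) < δ → dist u v < ε := by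
    intro ε hε
    obtain ⟨δh, hδh, hh⟩ := hequi (ε/3) (by linarith)
    refine ⟨δh, hδh, fun u v nn hn => ?_⟩
    obtain ⟨m, hmN, hm⟩ := RigB (ε/3) (by linarith) nn
    obtain ⟨r, rfl⟩ : ∃ r, m = r + nn := ⟨m - nn, by omega⟩
    have h1 : dist u ((⇑S)^[r + nn] u) < ε/3 := by rw [dist_comm]; exact hm u
    have h2 : dist ((⇑S)^[r + nn] u) ((⇑S)^[r + nn] v) < ε/3 := by
      rw [Function.iterate_add_apply, Function.iterate_add_apply]
      exact hh _ _ hn r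
    have h3 : dist ((⇑S)^[r + nn] v) v < ε/3 := hm v
    calc dist u v ≤ dist u ((⇑S)^[r + nn] u) + dist ((⇑S)^[r + nn] u) v := dist_triangle _ _ _
      _ ≤ dist u ((⇑S)^[r + nn] u) +
          (dist ((⇑S)^[r + nn] u) ((⇑S)^[r + nn] v) + dist ((⇑S)^[r + nn] v) v) := by
          have := dist_triangle ((⇑S)^[r + nn] u) ((⇑S)^[r + nn] v) v
          linarith
      _ < ε/3 + (ε/3 + ε/3) := by linarith
      _ = ε := by ring
  -- uniform continuity of multiplication
  have humul : UniformContinuous (fun p : G × G => p.1 * p.2) :=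
    CompactSpace.uniformContinuous_of_continuous continuous_mul
  rw [Metric.uniformContinuous_iff] at humul
  have hmulR : ∀ r > (0:ℝ), ∃ δ > (0:ℝ), ∀ a b : G, dist b 1 < δ → dist (a * b) a < r := by
    intro r hr
    obtain ⟨δ, hδ, h⟩ := humul r hr
    refine ⟨δ, hδ, fun a b hb => ?_⟩
    have hd : dist ((a, b) : G × G) ((a, 1) : G × G) < δ := by
      rw [Prod.dist_eq, dist_self]
      rwa [max_eq_right dist_nonneg]
    simpa using h hd
  have hmulL : ∀ r > (0:ℝ), ∃ δ > (0:ℝ), ∀ b h : G, dist b 1 < δ → dist (b * h) h < r := by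
    intro r hr
    obtain ⟨δ, hδ, h⟩ := humul r hr
    refine ⟨δ, hδ, fun b x hb => ?_⟩
    have hd : dist ((b, x) : G × G) ((1, x) : G × G) < δ := by
      rw [Prod.dist_eq, dist_self]
      rwa [max_eq_left dist_nonneg]
    simpa using h hd
  -- continuity translations
  have hcg : ∀ r > (0:ℝ), ∃ δ > (0:ℝ), ∀ a : G, dist (a * g) g < δ → dist a 1 < r := by
    intro r hr
    have hc : ContinuousAt (fun b : G => b * g⁻¹) g := (continuous_mul_right g⁻¹).continuousAt
    rw [Metric.continuousAt_iff] at hc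
    obtain ⟨δ, hδ, h⟩ := hc r hr
    refine ⟨δ, hδ, fun a ha => ?_⟩
    have := h (x := a * g) ha
    simpa [mul_assoc] using this
  have hinv1 : ∀ r > (0:ℝ), ∃ δ > (0:ℝ), ∀ b : G, dist b 1 < δ → dist b⁻¹ 1 < r := by
    intro r hr
    have hc : ContinuousAt (fun b : G => b⁻¹) (1 : G) := continuous_inv.continuousAt
    rw [Metric.continuousAt_iff] at hc
    obtain ⟨δ, hδ, h⟩ := hc r hr
    refine ⟨δ, hδ, fun b hb => ?_⟩
    have := h (x := b) hb
    simpa using this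
  -- boundedness facts
  have hbdd : ∀ s : Set (Y × G), Bornology.IsBounded s :=
    fun s => (isCompact_univ.isBounded).subset (subset_univ s)
  have hAne : ((univ : Set Y) ×ˢ ({g} : Set G)).Nonempty := ⟨(y₀, g), mem_univ _, rfl⟩
  -- the recurrence hypothesis gives small cocycles at times ≥ 1
  have Hc : ∀ r > (0:ℝ), ∃ m, 1 ≤ m ∧ ∀ y, dist (cocyc S φ m y) 1 < r := by
    intro r hr
    rcases hrec with h1 | h2
    · obtain ⟨δ₁, hδ₁, hg1⟩ := hcg r hr
      obtain ⟨m, hm, hdist⟩ := h1 δ₁ hδ₁ 1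
      refine ⟨m, hm, fun y => ?_⟩
      have hmem : ((⇑S)^[m] y, cocyc S φ m y * g) ∈
          (fun p : Y × G => (S p.1, φ p.1 * p.2))^[m] '' ((univ : Set Y) ×ˢ ({g} : Set G)) :=
        ⟨(y, g), ⟨mem_univ _, rfl⟩, skew_iterate S φ m y g⟩
      have hne : EMetric.hausdorffEdist
          ((fun p : Y × G => (S p.1, φ p.1 * p.2))^[m] '' ((univ : Set Y) ×ˢ ({g} : Set G)))
          ((univ : Set Y) ×ˢ ({g} : Set G)) ≠ ⊤ :=
        hausdorffEdist_ne_top_of_nonempty_of_bounded ⟨_, hmem⟩ hAne (hbdd _) (hbdd _)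
      obtain ⟨q, hq, hq'⟩ := exists_dist_lt_of_hausdorffDist_lt hmem hdist hne
      have hq2 : q.2 = g := hq.2
      have hle : dist (cocyc S φ m y * g) q.2 ≤
          dist (((⇑S)^[m] y, cocyc S φ m y * g) : Y × G) q := by
        rw [Prod.dist_eq]; exact le_max_right _ _
      rw [hq2] at hle
      exact hg1 _ (hle.trans_lt hq')
    · obtain ⟨δ₂, hδ₂, hI⟩ := hinv1 r hr
      obtain ⟨δ₁, hδ₁, hg1⟩ := hcg δ₂ hδ₂
      obtain ⟨m, hm, hdist⟩ := h2 δ₁ hδ₁ 1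
      refine ⟨m, hm, fun y => ?_⟩
      have hval : (fun p : Y × G => (S.symm p.1, (φ (S.symm p.1))⁻¹ * p.2))^[m] ((⇑S)^[m] y, g)
          = (y, (cocyc S φ m y)⁻¹ * g) := by
        rw [skew_inv_iterate S φ m ((⇑S)^[m] y) g, symm_iterate_apply S m y]
      have hmem : ((y, (cocyc S φ m y)⁻¹ * g) : Y × G) ∈
          (fun p : Y × G => (S.symm p.1, (φ (S.symm p.1))⁻¹ * p.2))^[m] ''
            ((univ : Set Y) ×ˢ ({g} : Set G)) :=
        ⟨((⇑S)^[m] y, g), ⟨mem_univ _, rfl⟩, hval⟩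
      have hne : EMetric.hausdorffEdist
          ((fun p : Y × G => (S.symm p.1, (φ (S.symm p.1))⁻¹ * p.2))^[m] ''
            ((univ : Set Y) ×ˢ ({g} : Set G)))
          ((univ : Set Y) ×ˢ ({g} : Set G)) ≠ ⊤ :=
        hausdorffEdist_ne_top_of_nonempty_of_bounded ⟨_, hmem⟩ hAne (hbdd _) (hbdd _)
      obtain ⟨q, hq, hq'⟩ := exists_dist_lt_of_hausdorffDist_lt hmem hdist hne
      have hq2 : q.2 = g := hq.2
      have hle : dist ((cocyc S φ m y)⁻¹ * g) q.2 ≤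
          dist (((y, (cocyc S φ m y)⁻¹ * g)) : Y × G) q := by
        rw [Prod.dist_eq]; exact le_max_right _ _
      rw [hq2] at hle
      have := hI _ (hg1 _ (hle.trans_lt hq'))
      simpa using this
  -- main argument
  intro ε hε
  obtain ⟨δG, hδG, hmulε⟩ := hmulL ε hε
  obtain ⟨δ₁, hδ₁pos, hKey⟩ := KeyD ε hε
  obtain ⟨δc, hδcpos, hBack⟩ := BackC δ₁ hδ₁pos
  -- the γ sequence
  have Hδ : ∀ γ : ℝ, ∃ δ : ℝ, 0 < γ →
      (0 < δ ∧ δ ≤ γ/2 ∧ ∀ a b : G, dist b 1 < δ → dist (a * b) a < γ/2) := by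
    intro γ
    by_cases hγ : 0 < γ
    · obtain ⟨δ, hδ, h⟩ := hmulR (γ/2) (by linarith)
      exact ⟨min δ (γ/2), fun _ => ⟨lt_min hδ (by linarith), min_le_right _ _,
        fun a b hb => h a b (hb.trans_le (min_le_left _ _))⟩⟩
    · exact ⟨0, fun h => absurd h hγ⟩
  choose F hF using Hδ
  set γ : ℕ → ℝ := fun i => F^[i] δG with hγdef
  have hγsucc : ∀ i, γ (i+1) = F (γ i) := fun i => Function.iterate_succ_apply' F i δG
  have hγpos : ∀ i, 0 < γ i := by
    intro i
    induction i with
    | zero => exact hδG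
    | succ i ih => rw [hγsucc]; exact (hF (γ i) ih).1
  have hγhalf : ∀ i, γ (i+1) ≤ γ i / 2 := fun i => by
    rw [hγsucc]; exact (hF (γ i) (hγpos i)).2.1
  have hγmul : ∀ i, ∀ a b : G, dist b 1 < γ (i+1) → dist (a * b) a < γ i / 2 := fun i => by
    rw [hγsucc]; exact (hF (γ i) (hγpos i)).2.2
  have hγle : ∀ i, γ i ≤ δG := by
    intro i
    induction i with
    | zero => exact le_refl _
    | succ i ih =>
        have := hγhalf i
        have := hγpos i
        linarith
  -- the n sequence
  have Hn : ∀ i : ℕ, ∃ m, 1 ≤ m ∧ ∀ y, dist (cocyc S φ m y) 1 < γ (i+1) :=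
    fun i => Hc (γ (i+1)) (hγpos _)
  choose n hn1 hnC using Hn
  -- block sums
  set B : ℕ → ℕ → ℕ := fun k l => ∑ i ∈ Finset.Ico k l, n i with hBdef
  have hCblock : ∀ d k, ∀ y, dist (cocyc S φ (B k (k + d + 1)) y) 1 < γ k := by
    intro d
    induction d with
    | zero =>
        intro k y
        have hB : B k (k + 0 + 1) = n k := by simp [hBdef, Nat.Ico_succ_singleton]
        rw [hB]
        have := hnC k y
        have h1 := hγhalf k
        have h2 := hγpos k
        linarith
    | succ d ih =>
        intro k y
        have hsplit : B k (k + (d+1) + 1) = B (k+1) ((k+1) + d + 1) + n k := by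
          have hk : k < k + (d+1) + 1 := by omega
          rw [hBdef]
          simp only []
          rw [Finset.sum_eq_sum_Ico_succ_bot hk]
          have : k + (d+1) + 1 = (k+1) + d + 1 := by omega
          rw [this, Nat.add_comm]
        rw [hsplit, cocyc_add S φ (B (k+1) ((k+1) + d + 1)) (n k) y]
        set u := (⇑S)^[n k] y
        set c := cocyc S φ (B (k+1) ((k+1) + d + 1)) u
        calc dist (c * cocyc S φ (n k) y) 1
            ≤ dist (c * cocyc S φ (n k) y) c + dist c 1 := dist_triangle _ _ _
          _ < γ k / 2 + γ k / 2 :=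
              add_lt_add (hγmul k c _ (hnC k y))
                ((ih (k+1) u).trans_le (hγhalf k))
          _ = γ k := by ring
  have hCkl : ∀ k l, k < l → ∀ y, dist (cocyc S φ (B k l) y) 1 < δG := by
    intro k l hkl y
    obtain ⟨d, rfl⟩ : ∃ d, l = k + d + 1 := ⟨l - k - 1, by omega⟩
    exact (hCblock d k y).trans_le (hγle k)
  have hBpos : ∀ k l, k < l → 1 ≤ B k l := by
    intro k l hkl
    calc 1 ≤ n k := hn1 k
      _ ≤ B k l := Finset.single_le_sum (f := n) (fun i _ => Nat.zero_le _)
          (Finset.mem_Ico.2 ⟨le_refl k, hkl⟩)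
  have hBsum : ∀ k l, k ≤ l → B 0 k + B k l = B 0 l :=
    fun k l h => Finset.sum_Ico_consecutive _ (Nat.zero_le k) h
  -- pigeonhole
  obtain ⟨k, l, hkl, hclose⟩ :=
    exists_close_pair (fun k => (⇑S)^[B 0 k] y₀) hδcpos
  refine ⟨B k l, hBpos k l hkl, ?_⟩
  have hrig : ∀ y, dist ((⇑S)^[B k l] y) y < ε := by
    apply hKey
    apply hBack ((⇑S)^[B k l] y₀) y₀ (B 0 k)
    have hI : (⇑S)^[B 0 k] ((⇑S)^[B k l] y₀) = (⇑S)^[B 0 l] y₀ := by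
      rw [← Function.iterate_add_apply, hBsum k l hkl.le]
    rw [hI, dist_comm]
    exact hclose
  intro x
  obtain ⟨y, h⟩ := x
  rw [skew_iterate S φ (B k l) y h, Prod.dist_eq]
  exact max_lt (hrig y) (hmulε _ h (hCkl k l hkl y))
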